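/- Let α ∈ [0,2) and X ⊆ H a vector subspace with its own norm. If there is A > 0 such that σ_{f−f*}((−δ,δ]) ≤ A‖f‖²_X δ^α for all f ∈ X and δ > 0, then ‖P_{t,s} − P‖²_{X→H} ≤ (2^{α+1}/(2−α)) A (t−s)^{−α} for all t > s. Conversely, if ‖P_{t,s} − P‖²_{X→H} ≤ B (t−s)^{−α} for all t > s, then σ_{f−f*}((−δ,δ]) ≤ (ρ(α)/2^α) B ‖f‖²_X δ^α for all f ∈ X and δ > 0. -/

import Mathlib

open MeasureTheory Real Set intervalIntegral

/-- The Fejér-type kernel `F_τ(x) = (sin(τx/2)/(τx/2))²`. -/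
noncomputable def Fker (τ x : ℝ) : ℝ := (Real.sin (τ * x / 2) / (τ * x / 2)) ^ 2

/-- `ρ(α) = inf_{x>0} x^{2-α}/sin²x` (points with `sin x = 0` excluded). -/
noncomputable def rho (α : ℝ) : ℝ :=
  sInf {r : ℝ | ∃ x > 0, Real.sin x ≠ 0 ∧ r = x ^ (2 - α) / Real.sin x ^ 2}

lemma Fker_nonneg (τ x : ℝ) : 0 ≤ Fker τ x := sq_nonneg _

lemma Fker_le_one (τ x : ℝ) : Fker τ x ≤ 1 := by
  unfold Fker
  rcases eq_or_ne (τ * x / 2) 0 with h | h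
  · simp [h]
  · rw [div_pow]
    exact div_le_one_of_le₀ Real.sin_sq_le_sq (by positivity)

lemma Fker_measurable (τ : ℝ) : Measurable (Fker τ) := by
  unfold Fker
  exact ((Real.measurable_sin.comp (by fun_prop)).div (by fun_prop)).pow_const 2

lemma Fker_integrable (τ : ℝ) (ν : Measure ℝ) [IsFiniteMeasure ν] :
    Integrable (Fker τ) ν := by
  refine ⟨(Fker_measurable τ).aestronglyMeasurable, ?_⟩
  refine MeasureTheory.HasFiniteIntegral.of_bounded (C := 1) (ae_of_all _ fun x => ?_)
  rw [Real.norm_eq_abs, abs_of_nonneg (Fker_nonneg τ x)]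
  exact Fker_le_one τ x

lemma sinc_ge {u x : ℝ} (hu : 0 < u) (hux : u ≤ x) (hx : x < π) :
    Real.sin x / x ≤ Real.sin u / u := by
  have hx0 : 0 < x := lt_of_lt_of_le hu hux
  have key : (u / x) * Real.sin x ≤ Real.sin u := by
    have hc := strictConcaveOn_sin_Icc.concaveOn
    have h := hc.2 ⟨hx0.le, hx.le⟩ ⟨le_refl 0, Real.pi_pos.le⟩
      (show (0:ℝ) ≤ u / x by positivity)
      (show (0:ℝ) ≤ 1 - u / x by rw [sub_nonneg]; exact div_le_one_of_le₀ hux hx0.le)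
      (by ring)
    simp only [smul_eq_mul, Real.sin_zero, mul_zero, add_zero] at h
    rwa [div_mul_cancel₀ u hx0.ne'] at h
  rw [div_le_div_iff₀ hx0 hu]
  calc Real.sin x * u = ((u / x) * Real.sin x) * x := by field_simp
    _ ≤ Real.sin u * x := by nlinarith [key]

lemma sinc_sq_ge {v x : ℝ} (hv : v ≠ 0) (hvx : |v| ≤ x) (hx : x < π) :
    (Real.sin x / x) ^ 2 ≤ (Real.sin v / v) ^ 2 := by
  have hvpos : 0 < |v| := abs_pos.2 hv
  have hx0 : 0 < x := lt_of_lt_of_le hvpos hvx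
  have h1 : (Real.sin |v| / |v|) ^ 2 = (Real.sin v / v) ^ 2 := by
    rcases abs_cases v with ⟨h, _⟩ | ⟨h, _⟩
    · rw [h]
    · rw [h, Real.sin_neg]; ring
  rw [← h1]
  have hge := sinc_ge hvpos hvx hx
  have hsx : 0 < Real.sin x / x := div_pos (Real.sin_pos_of_pos_of_lt_pi hx0 hx) hx0
  exact pow_le_pow_left₀ hsx.le hge 2

/-- The key integral bound for the direct part. -/
lemma direct_bound {ν : Measure ℝ} [IsFiniteMeasure ν]
    {α A n T : ℝ} (hα0 : 0 ≤ α) (hα2 : α < 2) (hA : 0 < A) (hn : 0 ≤ n) (hT : 0 < T)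
    (hb : ∀ δ : ℝ, 0 < δ → (ν (Set.Ioc (-δ) δ)).toReal ≤ A * n ^ 2 * δ ^ α) :
    ∫ x, Fker T x ∂ν ≤ 2 ^ (α + 1) / (2 - α) * A * T ^ (-α) * n ^ 2 := by
  have hint := Fker_integrable T ν
  rw [hint.integral_eq_integral_meas_lt (ae_of_all _ (Fker_nonneg T))]
  set c : ℝ := A * n ^ 2 * (2 ^ α * T ^ (-α)) with hc
  have hc0 : 0 ≤ c := by positivity
  set h : ℝ → ℝ := Set.indicator (Set.Ioc (0 : ℝ) 1) (fun t => c * t ^ (-α / 2)) with hh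
  have hexp : (-1 : ℝ) < -α / 2 := by linarith
  have hIoc : IntegrableOn (fun t : ℝ => c * t ^ (-α / 2)) (Set.Ioc 0 1) volume := by
    have := (intervalIntegral.intervalIntegrable_rpow' (a := 0) (b := 1) hexp).const_mul c
    rwa [intervalIntegrable_iff_integrableOn_Ioc_of_le zero_le_one] at this
  have hh_int : Integrable h (volume.restrict (Set.Ioi 0)) :=
    (hIoc.integrable_indicator measurableSet_Ioc).restrict
  have hmono : ∀ t ∈ Set.Ioi (0 : ℝ), (ν {a | t < Fker T a}).toReal ≤ h t := by
    intro t ht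
    simp only [Set.mem_Ioi] at ht
    rcases le_or_gt t 1 with ht1 | ht1
    · have hmem : t ∈ Set.Ioc (0 : ℝ) 1 := ⟨ht, ht1⟩
      rw [hh, Set.indicator_of_mem hmem]
      set r : ℝ := 2 * Real.sqrt (1 / t) / T with hr
      have hrpos : 0 < r := by
        have : 0 < Real.sqrt (1 / t) := Real.sqrt_pos.2 (by positivity)
        positivity
      have hsub : {a : ℝ | t < Fker T a} ⊆ Set.Ioc (-r) r := by
        intro a ha
        simp only [Set.mem_setOf_eq] at ha
        have hu : T * a / 2 ≠ 0 := by
          intro h0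
          rw [Fker, h0] at ha
          simp at ha; linarith
        have hF : Fker T a = Real.sin (T * a / 2) ^ 2 / (T * a / 2) ^ 2 := by
          rw [Fker, div_pow]
        have hlt : (T * a / 2) ^ 2 < 1 / t := by
          rw [hF, lt_div_iff₀ (by positivity)] at ha
          have hs1 : Real.sin (T * a / 2) ^ 2 ≤ 1 := by
            have := Real.neg_one_le_sin (T * a / 2)
            have := Real.sin_le_one (T * a / 2)
            nlinarith
          rw [lt_div_iff₀ ht]
          nlinarith
        have habs : |T * a / 2| < Real.sqrt (1 / t) := by
          have := Real.sqrt_lt_sqrt (sq_nonneg (T * a / 2)) hlt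
          rwa [Real.sqrt_sq_eq_abs] at this
        have haa : |a| < r := by
          rw [hr, lt_div_iff₀ hT]
          have : |T * a / 2| = T * |a| / 2 := by
            rw [abs_div, abs_mul, abs_of_pos hT]
            norm_num
          rw [this] at habs
          nlinarith
        exact ⟨by cases abs_lt.1 haa with | intro h1 h2 => linarith, (abs_lt.1 haa).2.le⟩
      have hmeas := ENNReal.toReal_mono (measure_ne_top ν _) (measure_mono hsub)
      refine hmeas.trans ((hb r hrpos).trans (le_of_eq ?_))
      have hsqrt : Real.sqrt (1 / t) = t ^ (-(1 / 2) : ℝ) := by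
        rw [Real.sqrt_eq_rpow, one_div, ← Real.rpow_neg_one t, ← Real.rpow_mul ht.le]
        norm_num
      have : r ^ α = 2 ^ α * T ^ (-α) * t ^ (-α / 2) := by
        rw [hr, hsqrt, Real.div_rpow (by positivity) hT.le,
          Real.mul_rpow (by norm_num) (by positivity),
          ← Real.rpow_mul ht.le, Real.rpow_neg hT.le,
          show -(1 / 2 : ℝ) * α = -α / 2 by ring, div_eq_mul_inv]
        ring
      rw [this, hc]; ring
    · have hempty : {a : ℝ | t < Fker T a} = ∅ := by
        ext a
        simp only [Set.mem_setOf_eq, Set.mem_empty_iff_false, iff_false, not_lt]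
        exact (Fker_le_one T a).trans ht1.le
      rw [hempty]
      simp only [measure_empty, ENNReal.toReal_zero]
      exact Set.indicator_nonneg (fun s hs => mul_nonneg hc0 (Real.rpow_nonneg hs.1.le _)) t
  have key : (∫ t in Set.Ioi (0 : ℝ), (ν {a | t < Fker T a}).toReal) ≤
      ∫ t in Set.Ioi (0 : ℝ), h t := by
    refine integral_mono_of_nonneg (ae_of_all _ fun t => ENNReal.toReal_nonneg) hh_int ?_
    exact (ae_restrict_iff' measurableSet_Ioi).2 (ae_of_all _ hmono)
  refine key.trans (le_of_eq ?_)
  rw [hh, MeasureTheory.integral_indicator measurableSet_Ioc,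
    Measure.restrict_restrict measurableSet_Ioc]
  have : Set.Ioc (0 : ℝ) 1 ∩ Set.Ioi 0 = Set.Ioc 0 1 := by
    ext z; simp only [Set.mem_inter_iff, Set.mem_Ioc, Set.mem_Ioi]; tauto
  rw [this, ← intervalIntegral.integral_of_le zero_le_one,
    intervalIntegral.integral_const_mul, integral_rpow (Or.inl hexp)]
  have h0 : (0 : ℝ) ^ (-α / 2 + 1) = 0 := Real.zero_rpow (by linarith)
  rw [Real.one_rpow, h0]
  have h2 : (2 : ℝ) ^ (α + 1) = 2 ^ α * 2 := by
    rw [Real.rpow_add (by norm_num), Real.rpow_one]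
  rw [h2, hc]
  have hne : -α / 2 + 1 ≠ 0 := ne_of_gt (by linarith)
  field_simp
  ring

/-- The key measure bound for the converse part, for a single `x ∈ (0, π)`. -/
lemma conv_bound {ν : Measure ℝ} [IsFiniteMeasure ν] (hν0 : ν {0} = 0)
    {α B n δ x : ℝ} (hB : 0 < B) (hn : 0 ≤ n) (hδ : 0 < δ) (hx0 : 0 < x) (hxπ : x < π)
    (hb : ∫ y, Fker (2 * x / δ) y ∂ν ≤ B * (2 * x / δ) ^ (-α) * n ^ 2) :
    (ν (Set.Ioc (-δ) δ)).toReal ≤ x ^ (2 - α) / Real.sin x ^ 2 / 2 ^ α * B * n ^ 2 * δ ^ α := by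
  set T : ℝ := 2 * x / δ with hT
  have hT0 : 0 < T := by positivity
  have hsin : 0 < Real.sin x := Real.sin_pos_of_pos_of_lt_pi hx0 hxπ
  set c₀ : ℝ := (Real.sin x / x) ^ 2 with hc₀
  have hc₀0 : 0 < c₀ := by positivity
  set s : Set ℝ := Set.Ioc (-δ) δ \ {0} with hs
  have hsmeas : MeasurableSet s := measurableSet_Ioc.diff (measurableSet_singleton 0)
  have hνs : ν s = ν (Set.Ioc (-δ) δ) := measure_diff_null hν0
  have hlow : c₀ * (ν s).toReal ≤ ∫ y in s, Fker T y ∂ν := by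
    refine setIntegral_ge_of_const_le_real hsmeas (measure_ne_top ν s) (fun y hy => ?_)
      (Fker_integrable T ν).integrableOn
    obtain ⟨⟨hy1, hy2⟩, hy0⟩ := hy
    simp only [Set.mem_singleton_iff] at hy0
    have hyabs : |y| ≤ δ := abs_le.2 ⟨by linarith, hy2⟩
    have hv : T * y / 2 = x * y / δ := by rw [hT]; field_simp
    have hvne : x * y / δ ≠ 0 := by
      intro h
      have : y = 0 := by field_simp at h; simpa [hx0.ne'] using h
      exact hy0 this
    have hvabs : |x * y / δ| ≤ x := by
      rw [abs_div, abs_mul, abs_of_pos hx0, abs_of_pos hδ, div_le_iff₀ hδ]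
      nlinarith [abs_nonneg y]
    have := sinc_sq_ge hvne hvabs hxπ
    rw [Fker, hv]
    exact this
  have hup : ∫ y in s, Fker T y ∂ν ≤ ∫ y, Fker T y ∂ν :=
    setIntegral_le_integral (Fker_integrable T ν) (ae_of_all _ (Fker_nonneg T))
  have hchain : c₀ * (ν (Set.Ioc (-δ) δ)).toReal ≤ B * T ^ (-α) * n ^ 2 := by
    rw [← hνs]; exact hlow.trans (hup.trans hb)
  rw [mul_comm] at hchain
  rw [← le_div_iff₀ hc₀0] at hchain
  refine hchain.trans (le_of_eq ?_)
  have hTα : T ^ (-α) = δ ^ α / (2 ^ α * x ^ α) := by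
    rw [hT, Real.rpow_neg (by positivity), Real.div_rpow (by positivity) hδ.le,
      Real.mul_rpow (by norm_num) hx0.le, inv_div]
  have hx2 : x ^ (2 - α) * x ^ α = x ^ 2 := by
    rw [← Real.rpow_natCast x 2, ← Real.rpow_add hx0]
    norm_num
  rw [hTα, hc₀]
  rw [div_pow]
  field_simp
  linear_combination (-(n ^ 2)) * hx2

/-- Reduction of an element of the `rho` set to one with argument in `(0, π)`. -/
lemma reduce_to_Ioo {x α : ℝ} (hx : 0 < x) (hs : Real.sin x ≠ 0) (hα : α ≤ 2) :
    ∃ y, 0 < y ∧ y < π ∧ Real.sin y ^ 2 = Real.sin x ^ 2 ∧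
      y ^ (2 - α) / Real.sin y ^ 2 ≤ x ^ (2 - α) / Real.sin x ^ 2 := by
  set k : ℤ := ⌊x / π⌋ with hk
  set y : ℝ := x - k * π with hy
  have hπ := Real.pi_pos
  have hk0 : (0 : ℝ) ≤ k := by
    have : (0 : ℤ) ≤ k := Int.floor_nonneg.2 (by positivity)
    exact_mod_cast this
  have hsinxy : Real.sin x = (-1) ^ k * Real.sin y := by
    have : y + k * π = x := by rw [hy]; ring
    rw [← this, Real.sin_add_int_mul_pi]
  have hsinsq : Real.sin y ^ 2 = Real.sin x ^ 2 := by
    rw [hsinxy]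
    rcases Int.even_or_odd k with he | ho
    · rw [he.neg_one_zpow]; ring
    · rw [Odd.neg_one_zpow ho]; ring
  have hsy : Real.sin y ≠ 0 := by
    intro h
    rw [h] at hsinxy
    simp at hsinxy
    exact hs hsinxy
  have hy0 : 0 ≤ y := by
    have h1 : (k : ℝ) ≤ x / π := Int.floor_le _
    rw [hy, sub_nonneg]
    calc (k : ℝ) * π ≤ (x / π) * π := by nlinarith
      _ = x := by field_simp
  have hy0' : 0 < y := by
    rcases hy0.lt_or_eq with h | h
    · exact h
    · exfalso; apply hsy; rw [← h, Real.sin_zero]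
  have hyπ : y < π := by
    have h2 : x / π < k + 1 := Int.lt_floor_add_one _
    rw [hy, sub_lt_iff_lt_add]
    calc x = (x / π) * π := by field_simp
      _ < (k + 1) * π := by nlinarith
      _ = π + k * π := by ring
  have hyx : y ≤ x := by
    rw [hy, sub_le_self_iff]
    positivity
  refine ⟨y, hy0', hyπ, hsinsq, ?_⟩
  rw [hsinsq]
  have hpow : y ^ (2 - α) ≤ x ^ (2 - α) := Real.rpow_le_rpow hy0'.le hyx (by linarith)
  have hpos : (0 : ℝ) < Real.sin x ^ 2 := by
    rcases hs.lt_or_gt with h | h <;> nlinarith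
  exact div_le_div_of_nonneg_right hpow hpos.le

theorem stmt10
    {H : Type*} [NormedAddCommGroup H] [InnerProductSpace ℂ H] [CompleteSpace H]
    (U : ℝ → H →L[ℂ] H)
    (hUgrp : ∀ a b : ℝ, U (a + b) = (U a).comp (U b))
    (hUiso : ∀ (τ : ℝ) (g : H), ‖U τ g‖ = ‖g‖)
    (hcont : ∀ f : H, Continuous fun τ : ℝ => U τ f)
    -- `P` is the orthogonal projection onto the fixed vectors of the group
    (P : H →L[ℂ] H)
    (hfix : ∀ (τ : ℝ) (f : H), U τ (P f) = P f)
    (horth : ∀ f g : H, (∀ τ : ℝ, U τ g = g) → (inner ℂ (f - P f) g : ℂ) = 0)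
    -- `μ f` is the spectral measure `σ_{f - Pf}`, finite with no atom at `0`
    (μ : H → Measure ℝ) (hfin : ∀ f : H, IsFiniteMeasure (μ f))
    (hμ0 : ∀ f : H, μ f {0} = 0)
    (hrep : ∀ (f : H) (s t : ℝ), s < t →
      ‖(t - s)⁻¹ • (∫ τ in s..t, U τ f) - P f‖ ^ 2 = ∫ x, Fker (t - s) x ∂(μ f))
    -- `X` is a vector subspace of `H` with its own norm `nX`
    (X : Submodule ℂ H) (nX : H → ℝ)
    (hnX : ∀ f ∈ X, 0 ≤ nX f)
    (α : ℝ) (hα : α ∈ Set.Ico (0 : ℝ) 2) :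
    -- direct part
    (∀ A : ℝ, 0 < A →
      (∀ f ∈ X, ∀ δ : ℝ, 0 < δ →
        (μ f (Set.Ioc (-δ) δ)).toReal ≤ A * nX f ^ 2 * δ ^ α) →
      ∀ s t : ℝ, s < t → ∀ f ∈ X,
        ‖(t - s)⁻¹ • (∫ τ in s..t, U τ f) - P f‖ ^ 2 ≤
          2 ^ (α + 1) / (2 - α) * A * (t - s) ^ (-α) * nX f ^ 2) ∧
    -- converse part
    (∀ B : ℝ, 0 < B →
      (∀ s t : ℝ, s < t → ∀ f ∈ X,
        ‖(t - s)⁻¹ • (∫ τ in s..t, U τ f) - P f‖ ^ 2 ≤ B * (t - s) ^ (-α) * nX f ^ 2) →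
      ∀ f ∈ X, ∀ δ : ℝ, 0 < δ →
        (μ f (Set.Ioc (-δ) δ)).toReal ≤ rho α / 2 ^ α * B * nX f ^ 2 * δ ^ α) := by
  obtain ⟨hα0, hα2⟩ := hα
  constructor
  · -- direct part
    intro A hA hA2 s t hst f hf
    haveI := hfin f
    rw [hrep f s t hst]
    exact direct_bound hα0 hα2 hA (hnX f hf) (by linarith) (hA2 f hf)
  · -- converse part
    intro B hB hball f hf δ hδ
    haveI := hfin f
    have hn := hnX f hf
    have key : ∀ x : ℝ, 0 < x → x < π →
        (μ f (Set.Ioc (-δ) δ)).toReal ≤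
          x ^ (2 - α) / Real.sin x ^ 2 / 2 ^ α * B * nX f ^ 2 * δ ^ α := by
      intro x hx0 hxπ
      have hT0 : (0 : ℝ) < 2 * x / δ := by positivity
      have hb := hball 0 (2 * x / δ) (by linarith) f hf
      rw [hrep f 0 (2 * x / δ) (by linarith), sub_zero] at hb
      exact conv_bound (hμ0 f) hB hn hδ hx0 hxπ hb
    have keyS : ∀ r ∈ {r : ℝ | ∃ x > 0, Real.sin x ≠ 0 ∧ r = x ^ (2 - α) / Real.sin x ^ 2},
        (μ f (Set.Ioc (-δ) δ)).toReal ≤ r / 2 ^ α * B * nX f ^ 2 * δ ^ α := by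
      rintro r ⟨x, hx0, hsx, rfl⟩
      obtain ⟨y, hy0, hyπ, _, hle⟩ := reduce_to_Ioo hx0 hsx (show α ≤ 2 by linarith)
      refine (key y hy0 hyπ).trans ?_
      exact mul_le_mul_of_nonneg_right (mul_le_mul_of_nonneg_right
        (mul_le_mul_of_nonneg_right (div_le_div_of_nonneg_right hle (by positivity)) hB.le)
        (sq_nonneg _)) (by positivity)
    have hSne : Set.Nonempty {r : ℝ | ∃ x > 0, Real.sin x ≠ 0 ∧ r = x ^ (2 - α) / Real.sin x ^ 2} :=
      ⟨(π / 2) ^ (2 - α) / Real.sin (π / 2) ^ 2, π / 2, by positivity,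
        by rw [Real.sin_pi_div_two]; norm_num, rfl⟩
    set M := (μ f (Set.Ioc (-δ) δ)).toReal with hM
    have hM0 : 0 ≤ M := ENNReal.toReal_nonneg
    set D := B * nX f ^ 2 * δ ^ α / 2 ^ α with hD
    have hD0 : 0 ≤ D := by positivity
    have keyS' : ∀ r ∈ {r : ℝ | ∃ x > 0, Real.sin x ≠ 0 ∧ r = x ^ (2 - α) / Real.sin x ^ 2},
        M ≤ r * D := by
      intro r hr
      refine (keyS r hr).trans (le_of_eq ?_)
      rw [hD]; ring
    have hgoal : rho α / 2 ^ α * B * nX f ^ 2 * δ ^ α = rho α * D := by rw [hD]; ring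
    rw [hgoal]
    rcases hD0.lt_or_eq with hDpos | hDzero
    · have hlb : M / D ≤ rho α :=
        le_csInf hSne (fun r hr => (div_le_iff₀ hDpos).2 (keyS' r hr))
      calc M = M / D * D := by field_simp
        _ ≤ rho α * D := mul_le_mul_of_nonneg_right hlb hDpos.le
    · obtain ⟨r0, hr0⟩ := hSne
      have h1 := keyS' r0 hr0
      rw [← hDzero, mul_zero] at h1
      rw [← hDzero, mul_zero]
      exact h1
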